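/- Let s, m ∈ ℕ with m ≥ 4s+1, let c > 0, and let α ∈ ℝ. Then there is a constant G > 0 such that for all x ∈ ℝ with 0 < |x - α| sufficiently small (specifically |x-α| < πδ/c for suitable δ ∈ (0,1/2)), ∫_{[-c,c]^m} [∑_{j=1}^m sin^{4s}(u_j(x-α))]^{-1} du_1⋯du_m ≤ G/(x-α)^{4s}. -/

import Mathlib

open MeasureTheory ENNReal

private lemma lintegral_pi_prod_aux : ∀ (n : ℕ) (f : Fin n → ℝ → ℝ≥0∞),
    (∀ i, Measurable (f i)) →
    ∫⁻ u : Fin n → ℝ, ∏ i, f i (u i) = ∏ i, ∫⁻ v : ℝ, f i v := by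
  intro n
  induction n with
  | zero => intro f _; rw [MeasureTheory.volume_pi]; simp [Measure.pi_univ]
  | succ n ih =>
    intro f hf
    have hmp := MeasureTheory.volume_preserving_piFinSuccAbove (fun _ : Fin (n+1) => ℝ) 0
    have hemb := (MeasurableEquiv.piFinSuccAbove (fun _ : Fin (n+1) => ℝ) 0).measurableEmbedding
    have key := hmp.lintegral_comp_emb hemb
      (fun p : ℝ × (Fin n → ℝ) => f 0 p.1 * ∏ i, f i.succ (p.2 i))
    have h1 : ∀ u : Fin (n+1) → ℝ,
        (fun p : ℝ × (Fin n → ℝ) => f 0 p.1 * ∏ i, f i.succ (p.2 i))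
          ((MeasurableEquiv.piFinSuccAbove (fun _ : Fin (n+1) => ℝ) 0) u)
        = ∏ i, f i (u i) := by
      intro u
      simp [MeasurableEquiv.piFinSuccAbove, Fin.prod_univ_succ, Fin.succAbove_zero, Fin.tail]
    rw [Fin.prod_univ_succ]
    calc ∫⁻ u : Fin (n+1) → ℝ, ∏ i, f i (u i)
        = ∫⁻ p : ℝ × (Fin n → ℝ), f 0 p.1 * ∏ i, f i.succ (p.2 i) := by
          rw [← key]; simp_rw [h1]
      _ = (∫⁻ v, f 0 v) * ∫⁻ q : Fin n → ℝ, ∏ i, f i.succ (q i) := by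
          rw [Measure.volume_eq_prod]
          exact lintegral_prod_mul (μ := (volume : Measure ℝ))
            (ν := (volume : Measure (Fin n → ℝ))) (f := f 0)
            (g := fun q : Fin n → ℝ => ∏ i, f i.succ (q i))
            (hf 0).aemeasurable (Finset.measurable_prod _ fun i _ =>
              (hf i.succ).comp (measurable_pi_apply i)).aemeasurable
      _ = (∫⁻ v, f 0 v) * ∏ i : Fin n, ∫⁻ v, f i.succ v := by
          rw [ih _ fun i => hf i.succ]

private lemma oneDim_pos_lt_top {c r : ℝ} (hc : 0 < c) (hr1 : r < 1) :
    ∫⁻ v in Set.Icc 0 c, (ENNReal.ofReal (|v| ^ r))⁻¹ < ⊤ := by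
  rw [← Measure.restrict_congr_set MeasureTheory.Ioc_ae_eq_Icc]
  have heq : ∀ v ∈ Set.Ioc (0:ℝ) c,
      (ENNReal.ofReal (|v| ^ r))⁻¹ = ENNReal.ofReal (v ^ (-r)) := by
    intro v hv
    rw [abs_of_pos hv.1, Real.rpow_neg hv.1.le,
      ENNReal.ofReal_inv_of_pos (Real.rpow_pos_of_pos hv.1 r)]
  rw [setLIntegral_congr_fun measurableSet_Ioc heq]
  have hint : IntegrableOn (fun x : ℝ => x ^ (-r)) (Set.Ioc 0 c) volume :=
    (intervalIntegrable_iff_integrableOn_Ioc_of_le hc.le).mp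
      (intervalIntegral.intervalIntegrable_rpow' (by linarith))
  exact hint.lintegral_lt_top

private lemma oneDim_lt_top {c r : ℝ} (hc : 0 < c) (hr1 : r < 1) :
    ∫⁻ v in Set.Icc (-c) c, (ENNReal.ofReal (|v| ^ r))⁻¹ < ⊤ := by
  have hsub : Set.Icc (-c) c ⊆ Set.Icc (-c) 0 ∪ Set.Icc 0 c := by
    intro v hv
    rcases le_total v 0 with h | h
    · exact Or.inl ⟨hv.1, h⟩
    · exact Or.inr ⟨h, hv.2⟩
  have hneg : ∫⁻ v in Set.Icc (-c) 0, (ENNReal.ofReal (|v| ^ r))⁻¹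
      = ∫⁻ v in Set.Icc 0 c, (ENNReal.ofReal (|v| ^ r))⁻¹ := by
    have hmp := Measure.measurePreserving_neg (volume : Measure ℝ)
    have := hmp.setLIntegral_comp_emb (Homeomorph.neg ℝ).measurableEmbedding
      (fun v => (ENNReal.ofReal (|v| ^ r))⁻¹) (Set.Icc 0 c)
    rw [Set.image_neg_eq_neg, Set.neg_Icc, neg_zero] at this
    simp_rw [abs_neg] at this
    exact this.symm
  calc ∫⁻ v in Set.Icc (-c) c, (ENNReal.ofReal (|v| ^ r))⁻¹
      ≤ ∫⁻ v in Set.Icc (-c) 0 ∪ Set.Icc 0 c, (ENNReal.ofReal (|v| ^ r))⁻¹ :=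
        lintegral_mono_set hsub
    _ ≤ (∫⁻ v in Set.Icc (-c) 0, (ENNReal.ofReal (|v| ^ r))⁻¹)
        + ∫⁻ v in Set.Icc 0 c, (ENNReal.ofReal (|v| ^ r))⁻¹ := lintegral_union_le _ _ _
    _ < ⊤ := by
        rw [hneg]
        exact ENNReal.add_lt_top.mpr ⟨oneDim_pos_lt_top hc hr1, oneDim_pos_lt_top hc hr1⟩

private lemma sum_sin_lower (s m : ℕ) (hm : 4 * s + 1 ≤ m) {c : ℝ} (hc : 0 < c)
    (u : Fin m → ℝ) {t : ℝ} (hxα : |t| < Real.pi * (1/4) / c)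
    (hu : ∀ j, u j ∈ Set.Icc (-c) c) :
    (2/Real.pi)^(4*s) * |t|^(4*s) * ∏ j, |u j| ^ ((4*s : ℝ)/m) ≤
      ∑ j, Real.sin (u j * t) ^ (4*s) := by
  have hm0 : (0:ℝ) < m := by exact_mod_cast Nat.lt_of_lt_of_le (Nat.succ_pos _) hm
  have hπ := Real.pi_pos
  have step1 : ∀ j, (2/Real.pi)^(4*s) * |t|^(4*s) * |u j|^(4*s)
      ≤ Real.sin (u j * t) ^ (4*s) := by
    intro j
    have huj : |u j| ≤ c := abs_le.mpr ⟨(hu j).1, (hu j).2⟩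
    have habs : |u j * t| ≤ Real.pi / 2 := by
      rw [abs_mul]
      have h1 : |u j| * |t| ≤ c * |t| :=
        mul_le_mul_of_nonneg_right huj (abs_nonneg _)
      have h2 : c * |t| < c * (Real.pi * (1/4) / c) :=
        mul_lt_mul_of_pos_left hxα hc
      have h3 : c * (Real.pi * (1/4) / c) = Real.pi / 4 := by field_simp
      nlinarith
    have hj := Real.mul_abs_le_abs_sin habs
    have hnn : 0 ≤ 2 / Real.pi * |u j * t| := by positivity
    have := pow_le_pow_left₀ hnn hj (4*s)
    calc (2/Real.pi)^(4*s) * |t|^(4*s) * |u j|^(4*s)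
        = (2/Real.pi * |u j * t|)^(4*s) := by rw [abs_mul]; ring
      _ ≤ |Real.sin (u j * t)|^(4*s) := this
      _ = Real.sin (u j * t) ^ (4*s) := Even.pow_abs ⟨2*s, by ring⟩ _
  have step3 : ∏ j, |u j| ^ ((4*s : ℝ)/m) ≤ ∑ j, |u j|^(4*s) := by
    have amgm := Real.geom_mean_le_arith_mean_weighted Finset.univ
      (fun _ : Fin m => (m:ℝ)⁻¹) (fun j => |u j|^(4*s))
      (fun _ _ => by positivity)
      (by simp [Finset.card_univ]; field_simp)
      (fun _ _ => by positivity)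
    have hrw : ∀ j : Fin m, (|u j|^(4*s) : ℝ) ^ ((m:ℝ)⁻¹) = |u j| ^ ((4*s : ℝ)/m) := by
      intro j
      rw [← Real.rpow_natCast |u j| (4*s), ← Real.rpow_mul (abs_nonneg _)]
      norm_num [div_eq_mul_inv]
    calc ∏ j, |u j| ^ ((4*s : ℝ)/m)
        = ∏ j, (|u j|^(4*s) : ℝ) ^ ((m:ℝ)⁻¹) := by simp_rw [hrw]
      _ ≤ ∑ j, (m:ℝ)⁻¹ * |u j|^(4*s) := amgm
      _ = (m:ℝ)⁻¹ * ∑ j, |u j|^(4*s) := by rw [Finset.mul_sum]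
      _ ≤ 1 * ∑ j, |u j|^(4*s) := by
          apply mul_le_mul_of_nonneg_right
          · rw [inv_le_one_iff₀]; right; exact_mod_cast Nat.one_le_iff_ne_zero.mpr (by omega)
          · positivity
      _ = ∑ j, |u j|^(4*s) := one_mul _
  calc (2/Real.pi)^(4*s) * |t|^(4*s) * ∏ j, |u j| ^ ((4*s : ℝ)/m)
      ≤ (2/Real.pi)^(4*s) * |t|^(4*s) * ∑ j, |u j|^(4*s) :=
        mul_le_mul_of_nonneg_left step3 (by positivity)
    _ = ∑ j, (2/Real.pi)^(4*s) * |t|^(4*s) * |u j|^(4*s) := by rw [Finset.mul_sum]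
    _ ≤ ∑ j, Real.sin (u j * t) ^ (4*s) := Finset.sum_le_sum fun j _ => step1 j

/-- For `m ≥ 4s+1`, `c > 0` and `α ∈ ℝ`, there are `δ ∈ (0,1/2)` and `G > 0` such that for
all `x ≠ α` with `|x-α| < πδ/c`,
`∫_{[-c,c]^m} (∑_j sin^{4s}(u_j(x-α)))⁻¹ du ≤ G/(x-α)^{4s}`. -/
theorem integral_inv_sum_sin_le (s m : ℕ) (hm : 4 * s + 1 ≤ m) (c : ℝ) (hc : 0 < c)
    (α : ℝ) :
    ∃ δ : ℝ, 0 < δ ∧ δ < 1 / 2 ∧ ∃ G > (0 : ℝ), ∀ x : ℝ, x ≠ α →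
      |x - α| < Real.pi * δ / c →
      ∫⁻ u : Fin m → ℝ in Set.univ.pi fun _ => Set.Icc (-c) c,
          (ENNReal.ofReal (∑ j, Real.sin (u j * (x - α)) ^ (4 * s)))⁻¹
        ≤ ENNReal.ofReal (G / (x - α) ^ (4 * s)) := by
  have hπ := Real.pi_pos
  have hm0 : (0:ℝ) < m := by exact_mod_cast Nat.lt_of_lt_of_le (Nat.succ_pos _) hm
  set r : ℝ := (4*s : ℝ)/m with hr_def
  have hr1 : r < 1 := by
    rw [hr_def, div_lt_one hm0]
    have : (4*s + 1 : ℝ) ≤ m := by exact_mod_cast hm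
    linarith
  set g : ℝ → ℝ≥0∞ := fun v => (ENNReal.ofReal (|v| ^ r))⁻¹ with hg_def
  have hgm : Measurable g := by fun_prop
  set K : ℝ≥0∞ := ∫⁻ v in Set.Icc (-c) c, g v with hK_def
  have hK : K < ⊤ := oneDim_lt_top hc hr1
  have hKm : K ^ m ≠ ⊤ := ENNReal.pow_ne_top hK.ne
  refine ⟨1/4, by norm_num, by norm_num,
    (Real.pi/2)^(4*s) * (K^m).toReal + 1, by positivity, ?_⟩
  intro x hx hxα
  set t : ℝ := x - α with ht_def
  have ht0 : t ≠ 0 := sub_ne_zero.mpr hx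
  set a : ℝ := (2/Real.pi)^(4*s) * |t|^(4*s) with ha_def
  have ha : 0 < a := by positivity
  set T : Set (Fin m → ℝ) := Set.univ.pi fun _ => Set.Icc (-c) c with hT_def
  have hT : MeasurableSet T := MeasurableSet.univ_pi fun _ => measurableSet_Icc
  -- pointwise bound
  have key : ∀ u ∈ T, (ENNReal.ofReal (∑ j, Real.sin (u j * t) ^ (4*s)))⁻¹
      ≤ (ENNReal.ofReal a)⁻¹ * ∏ j, g (u j) := by
    intro u hu
    have hu' : ∀ j, u j ∈ Set.Icc (-c) c := fun j => hu j (Set.mem_univ j)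
    have hlow := sum_sin_lower s m hm hc u hxα hu'
    have h1 : (ENNReal.ofReal (∑ j, Real.sin (u j * t) ^ (4*s)))⁻¹
        ≤ (ENNReal.ofReal (a * ∏ j, |u j| ^ r))⁻¹ :=
      ENNReal.inv_le_inv' (ENNReal.ofReal_le_ofReal hlow)
    refine h1.trans_eq ?_
    rw [ENNReal.ofReal_mul ha.le,
      ENNReal.ofReal_prod_of_nonneg (fun j _ => Real.rpow_nonneg (abs_nonneg _) _),
      ENNReal.mul_inv (Or.inl (ENNReal.ofReal_pos.mpr ha).ne') (Or.inl ENNReal.ofReal_ne_top),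
      ENNReal.prod_inv_distrib (fun i _ j _ _ => Or.inr ENNReal.ofReal_ne_top)]
  -- indicator product
  have hind : ∀ u : Fin m → ℝ, T.indicator (fun u => ∏ j, g (u j)) u
      = ∏ j, (Set.Icc (-c) c).indicator g (u j) := by
    intro u
    by_cases hu : u ∈ T
    · rw [Set.indicator_of_mem hu]
      exact Finset.prod_congr rfl fun j _ =>
        (Set.indicator_of_mem (hu j (Set.mem_univ j)) g).symm
    · rw [Set.indicator_of_notMem hu]
      rw [hT_def, Set.mem_univ_pi] at hu
      push_neg at hu
      obtain ⟨j, hj⟩ := hu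
      exact (Finset.prod_eq_zero (Finset.mem_univ j)
        (by rw [Set.indicator_of_notMem hj])).symm
  have hprod : ∫⁻ u : Fin m → ℝ in T, ∏ j, g (u j) = K ^ m := by
    rw [← lintegral_indicator hT]
    simp_rw [hind]
    rw [lintegral_pi_prod_aux m (fun _ => (Set.Icc (-c) c).indicator g)
      (fun _ => hgm.indicator measurableSet_Icc)]
    simp_rw [lintegral_indicator measurableSet_Icc]
    rw [Finset.prod_const, Finset.card_univ, Fintype.card_fin]
  -- final chain
  calc ∫⁻ u : Fin m → ℝ in T, (ENNReal.ofReal (∑ j, Real.sin (u j * t) ^ (4*s)))⁻¹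
      ≤ ∫⁻ u : Fin m → ℝ in T, (ENNReal.ofReal a)⁻¹ * ∏ j, g (u j) :=
        setLIntegral_mono' hT key
    _ = (ENNReal.ofReal a)⁻¹ * ∫⁻ u : Fin m → ℝ in T, ∏ j, g (u j) :=
        lintegral_const_mul' _ _ (ENNReal.inv_ne_top.mpr (ENNReal.ofReal_pos.mpr ha).ne')
    _ = (ENNReal.ofReal a)⁻¹ * K ^ m := by rw [hprod]
    _ ≤ ENNReal.ofReal (((Real.pi/2)^(4*s) * (K^m).toReal + 1) / t ^ (4*s)) := by
        rw [← ENNReal.ofReal_inv_of_pos ha, ← ENNReal.ofReal_toReal hKm,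
          ← ENNReal.ofReal_mul (by positivity)]
        apply ENNReal.ofReal_le_ofReal
        have htpow : (0:ℝ) < |t|^(4*s) := by positivity
        have hainv : a⁻¹ = (Real.pi/2)^(4*s) / |t|^(4*s) := by
          rw [ha_def, mul_inv, ← inv_pow, inv_div]
          ring
        rw [hainv, div_mul_eq_mul_div, ← Even.pow_abs ⟨2*s, by ring⟩ t]
        gcongr
        rw [ENNReal.toReal_ofReal ENNReal.toReal_nonneg]
        linarith
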